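/- In the group G presented by ⟨b, t, s | t⁻¹ b s = b³, s⁻¹ b t = b³⟩, for every natural number m one has t⁻ᵐ b sᵐ = b^(3^m) in G. -/

import Mathlib

/-- The relators of `⟨b, t, s ∣ t⁻¹ b s = b³, s⁻¹ b t = b³⟩`;
generator `0` is `b`, generator `1` is `t`, generator `2` is `s`. -/
def rels6 : Set (FreeGroup (Fin 3)) :=
  { (FreeGroup.of 1)⁻¹ * FreeGroup.of 0 * FreeGroup.of 2 * ((FreeGroup.of 0) ^ 3)⁻¹,
    (FreeGroup.of 2)⁻¹ * FreeGroup.of 0 * FreeGroup.of 1 * ((FreeGroup.of 0) ^ 3)⁻¹ }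

namespace Stmt6Aux

abbrev G := PresentedGroup rels6
abbrev b : G := PresentedGroup.of 0
abbrev t : G := PresentedGroup.of 1
abbrev s : G := PresentedGroup.of 2

lemma rel_of_mem {r : FreeGroup (Fin 3)} (h : r ∈ rels6) :
    PresentedGroup.mk rels6 r = 1 :=
  (QuotientGroup.eq_one_iff _).2 (Subgroup.subset_normalClosure h)

lemma rel1 : t⁻¹ * b * s = b ^ 3 := by
  have h := rel_of_mem (r := (FreeGroup.of 1)⁻¹ * FreeGroup.of 0 * FreeGroup.of 2 *
      ((FreeGroup.of 0) ^ 3)⁻¹) (Or.inl rfl)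
  simpa [mul_inv_eq_one, PresentedGroup.of] using h

lemma rel2 : s⁻¹ * b * t = b ^ 3 := by
  have h := rel_of_mem (r := (FreeGroup.of 2)⁻¹ * FreeGroup.of 0 * FreeGroup.of 1 *
      ((FreeGroup.of 0) ^ 3)⁻¹) (Or.inr rfl)
  simpa [mul_inv_eq_one, PresentedGroup.of] using h

/-- joint odd-power lemma -/
lemma odd_pow (n : ℕ) :
    t⁻¹ * b ^ (2 * n + 1) * s = b ^ (3 * (2 * n + 1)) ∧
    s⁻¹ * b ^ (2 * n + 1) * t = b ^ (3 * (2 * n + 1)) := by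
  induction n with
  | zero => simpa using ⟨rel1, rel2⟩
  | succ n ih =>
    obtain ⟨h1, h2⟩ := ih
    constructor
    · have : t⁻¹ * b ^ (2 * (n + 1) + 1) * s
          = (t⁻¹ * b * s) * (s⁻¹ * b ^ (2 * n + 1) * t) * (t⁻¹ * b * s) := by
        rw [show 2 * (n + 1) + 1 = 1 + (2 * n + 1) + 1 by ring]
        rw [pow_add, pow_add, pow_one]
        group
      rw [this, rel1, h2, ← pow_add, ← pow_add]
      ring_nf
    · have : s⁻¹ * b ^ (2 * (n + 1) + 1) * t
          = (s⁻¹ * b * t) * (t⁻¹ * b ^ (2 * n + 1) * s) * (s⁻¹ * b * t) := by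
        rw [show 2 * (n + 1) + 1 = 1 + (2 * n + 1) + 1 by ring]
        rw [pow_add, pow_add, pow_one]
        group
      rw [this, rel2, h1, ← pow_add, ← pow_add]
      ring_nf

lemma conj_odd {k : ℕ} (hk : Odd k) : t⁻¹ * b ^ k * s = b ^ (3 * k) := by
  obtain ⟨n, rfl⟩ := hk
  simpa [two_mul] using (odd_pow n).1

end Stmt6Aux

/-- in `G = ⟨b, t, s ∣ t⁻¹ b s = b³, s⁻¹ b t = b³⟩` one has
`t⁻ᵐ b sᵐ = b^(3^m)` for every natural number `m`. -/
theorem stmt6 (m : ℕ) :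
    ((PresentedGroup.of 1 : PresentedGroup rels6) ^ m)⁻¹ * PresentedGroup.of 0 *
        (PresentedGroup.of 2 : PresentedGroup rels6) ^ m
      = (PresentedGroup.of 0 : PresentedGroup rels6) ^ (3 ^ m) := by
  induction m with
  | zero => simp
  | succ m ih =>
    have key : Stmt6Aux.t⁻¹ * Stmt6Aux.b ^ (3 ^ m) * Stmt6Aux.s = Stmt6Aux.b ^ (3 * 3 ^ m) :=
      Stmt6Aux.conj_odd (Odd.pow ⟨1, rfl⟩)
    calc ((PresentedGroup.of 1 : PresentedGroup rels6) ^ (m + 1))⁻¹ * PresentedGroup.of 0 *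
          (PresentedGroup.of 2 : PresentedGroup rels6) ^ (m + 1)
        = Stmt6Aux.t⁻¹ * (((PresentedGroup.of 1 : PresentedGroup rels6) ^ m)⁻¹ *
            PresentedGroup.of 0 * (PresentedGroup.of 2 : PresentedGroup rels6) ^ m) *
            Stmt6Aux.s := by
          rw [pow_succ, pow_succ]; group
      _ = Stmt6Aux.t⁻¹ * Stmt6Aux.b ^ (3 ^ m) * Stmt6Aux.s := by rw [ih]
      _ = Stmt6Aux.b ^ (3 ^ (m + 1)) := by rw [key, pow_succ]; ring_nf
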